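/- If X is a random variable taking values in [a,b] almost surely, then X is β-sub-Gaussian with β = (b - a)/2. -/

import Mathlib

open MeasureTheory

/-- `X` is `β`-sub-Gaussian: `E[exp(λ(X − E X))] ≤ exp(λ²β²/2)` for all `λ ∈ ℝ`. -/
def IsSubGaussian {Ω : Type*} [MeasurableSpace Ω] (P : MeasureTheory.Measure Ω)
    (X : Ω → ℝ) (β : ℝ) : Prop :=
  ∀ l : ℝ, (∫ ω, Real.exp (l * (X ω - ∫ ω₀, X ω₀ ∂P)) ∂P) ≤ Real.exp (l ^ 2 * β ^ 2 / 2)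

section HoeffdingAux
open Real
open Real

noncomputable def Dd (p t : ℝ) : ℝ := 1 - p + p * exp t
noncomputable def g0 (p t : ℝ) : ℝ := p * t + t^2/8 - log (Dd p t)
noncomputable def g1 (p t : ℝ) : ℝ := p + t/4 - p * exp t / (Dd p t)
noncomputable def g2 (p t : ℝ) : ℝ := 1/4 - p * exp t * (1-p) / (Dd p t)^2

lemma Dd_pos {p : ℝ} (hp0 : 0 ≤ p) (hp1 : p ≤ 1) (t : ℝ) : 0 < Dd p t := by
  unfold Dd
  rcases eq_or_lt_of_le hp0 with h | h
  · simp [← h]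
  · nlinarith [exp_pos t, mul_pos h (exp_pos t)]

lemma hasDerivAt_Dd (p t : ℝ) : HasDerivAt (Dd p) (p * exp t) t := by
  exact (((hasDerivAt_exp t).const_mul p).const_add (1 - p))

lemma hasDerivAt_g0 {p : ℝ} (hp0 : 0 ≤ p) (hp1 : p ≤ 1) (t : ℝ) :
    HasDerivAt (g0 p) (g1 p t) t := by
  have hD := hasDerivAt_Dd p t
  have hlog : HasDerivAt (fun t => log (Dd p t)) (p * exp t / Dd p t) t := by
    have := (hasDerivAt_log (Dd_pos hp0 hp1 t).ne').comp t hD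
    rw [div_eq_inv_mul]; exact this
  have h1 : HasDerivAt (fun t : ℝ => p * t + t^2/8) (p + t/4) t := by
    have h2 : HasDerivAt (fun t : ℝ => p * t) p t := by
      simpa using (hasDerivAt_id t).const_mul p
    have h3 := h2.add ((hasDerivAt_pow 2 t).div_const 8)
    refine h3.congr_deriv ?_
    norm_num; ring
  exact h1.sub hlog

lemma hasDerivAt_g1 {p : ℝ} (hp0 : 0 ≤ p) (hp1 : p ≤ 1) (t : ℝ) :
    HasDerivAt (g1 p) (g2 p t) t := by
  have hD := hasDerivAt_Dd p t
  have hnum : HasDerivAt (fun t => p * exp t) (p * exp t) t := (hasDerivAt_exp t).const_mul p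
  have hdiv : HasDerivAt (fun t => p * exp t / Dd p t)
      ((p * exp t * Dd p t - p * exp t * (p * exp t)) / (Dd p t)^2) t :=
    hnum.div hD (Dd_pos hp0 hp1 t).ne'
  have h1 : HasDerivAt (fun t : ℝ => p + t/4) (1/4) t := by
    simpa using ((hasDerivAt_id t).div_const 4).const_add p
  have h2 := h1.sub hdiv
  have hAB : p * exp t * Dd p t - p * exp t * (p * exp t) = p * exp t * (1 - p) := by
    unfold Dd; ring
  unfold g2
  rw [← hAB]
  exact h2

lemma g2_nonneg {p : ℝ} (hp0 : 0 ≤ p) (hp1 : p ≤ 1) (t : ℝ) : 0 ≤ g2 p t := by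
  unfold g2
  rw [sub_nonneg, div_le_iff₀ (pow_pos (Dd_pos hp0 hp1 t) 2)]
  have h := sq_nonneg ((1 - p) - p * exp t)
  unfold Dd
  nlinarith [exp_pos t]

lemma g1_mono : True := trivial

lemma g1_zero (p : ℝ) : g1 p 0 = 0 := by simp [g1, Dd]

lemma g0_zero (p : ℝ) : g0 p 0 = 0 := by simp [g0, Dd]

lemma g0_nonneg {p : ℝ} (hp0 : 0 ≤ p) (hp1 : p ≤ 1) (t : ℝ) : 0 ≤ g0 p t := by
  have hdiff1 : Differentiable ℝ (g1 p) := fun t => (hasDerivAt_g1 hp0 hp1 t).differentiableAt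
  have hmono1 : Monotone (g1 p) := by
    apply monotone_of_deriv_nonneg hdiff1
    intro t
    rw [(hasDerivAt_g1 hp0 hp1 t).deriv]
    exact g2_nonneg hp0 hp1 t
  have hdiff0 : Differentiable ℝ (g0 p) := fun t => (hasDerivAt_g0 hp0 hp1 t).differentiableAt
  have hderiv0 : ∀ t, deriv (g0 p) t = g1 p t := fun t => (hasDerivAt_g0 hp0 hp1 t).deriv
  rcases le_total 0 t with h | h
  · have hm : MonotoneOn (g0 p) (Set.Ici 0) := by
      apply monotoneOn_of_deriv_nonneg (convex_Ici 0) hdiff0.continuous.continuousOn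
        (fun x _ => (hdiff0 x).differentiableWithinAt)
      intro x hx
      rw [hderiv0 x]
      rw [← g1_zero p]
      exact hmono1 (le_of_lt (by simpa using hx))
    have := hm (Set.self_mem_Ici) h h
    rwa [g0_zero] at this
  · have hm : AntitoneOn (g0 p) (Set.Iic 0) := by
      apply antitoneOn_of_deriv_nonpos (convex_Iic 0) hdiff0.continuous.continuousOn
        (fun x _ => (hdiff0 x).differentiableWithinAt)
      intro x hx
      rw [hderiv0 x]
      rw [← g1_zero p]
      exact hmono1 (le_of_lt (by simpa using hx))
    have := hm h (Set.self_mem_Iic) h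
    rwa [g0_zero] at this

lemma key_ineq {p : ℝ} (hp0 : 0 ≤ p) (hp1 : p ≤ 1) (h : ℝ) :
    1 - p + p * exp h ≤ exp (p * h + h ^ 2 / 8) := by
  have h0 := g0_nonneg hp0 hp1 h
  unfold g0 at h0
  have hD := Dd_pos hp0 hp1 h
  have : log (Dd p h) ≤ p * h + h ^ 2 / 8 := by linarith
  calc 1 - p + p * exp h = Dd p h := rfl
    _ = exp (log (Dd p h)) := (exp_log hD).symm
    _ ≤ _ := exp_le_exp.mpr this

lemma pointwise_conv {a' b' l y : ℝ} (hd : a' < b') (hy1 : a' ≤ y) (hy2 : y ≤ b') :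
    exp (l * y) ≤ ((b' - y) * exp (l * a') + (y - a') * exp (l * b')) / (b' - a') := by
  have hd' : (0:ℝ) < b' - a' := by linarith
  set t : ℝ := (b' - y) / (b' - a') with ht
  have ht0 : 0 ≤ t := div_nonneg (by linarith) hd'.le
  have ht1 : 1 - t = (y - a') / (b' - a') := by rw [ht]; field_simp; ring
  have ht1' : 0 ≤ 1 - t := by rw [ht1]; exact div_nonneg (by linarith) hd'.le
  have hy : l * y = t * (l * a') + (1 - t) * (l * b') := by
    rw [ht1, ht]; field_simp; ring
  have hc := convexOn_exp.2 (Set.mem_univ (l * a')) (Set.mem_univ (l * b')) ht0 ht1' (by ring)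
  rw [smul_eq_mul, smul_eq_mul] at hc
  rw [hy]
  calc exp (t * (l * a') + (1 - t) * (l * b')) ≤ t * exp (l * a') + (1 - t) * exp (l * b') := hc
    _ = ((b' - y) * exp (l * a') + (y - a') * exp (l * b')) / (b' - a') := by
        rw [ht1, ht]; field_simp

lemma final_calc {a' b' l : ℝ} (ha : a' ≤ 0) (hb : 0 ≤ b') (hd : a' < b') :
    (b' * exp (l * a') - a' * exp (l * b')) / (b' - a') ≤ exp ((l * (b' - a')) ^ 2 / 8) := by
  have hd' : (0:ℝ) < b' - a' := by linarith
  set p : ℝ := -a' / (b' - a') with hp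
  have hp0 : 0 ≤ p := div_nonneg (by linarith) hd'.le
  have hp1 : p ≤ 1 := by rw [hp, div_le_one hd']; linarith
  have key := key_ineq hp0 hp1 (l * (b' - a'))
  have e1 : (b' * exp (l * a') - a' * exp (l * b')) / (b' - a')
      = exp (l * a') * (1 - p + p * exp (l * (b' - a'))) := by
    have : exp (l * b') = exp (l * a') * exp (l * (b' - a')) := by
      rw [← exp_add]
      congr 1
      ring
    rw [this, hp]; field_simp; ring
  have e2 : exp (l * a') * exp (p * (l * (b' - a')) + (l * (b' - a')) ^ 2 / 8)
      = exp ((l * (b' - a')) ^ 2 / 8) := by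
    rw [← exp_add]
    congr 1
    rw [hp]; field_simp; ring
  rw [e1, ← e2]
  exact mul_le_mul_of_nonneg_left key (exp_pos _).le

theorem isSubGaussian_of_mem_Icc' {Ω : Type*} [MeasurableSpace Ω] (P : Measure Ω)
    [IsProbabilityMeasure P] (X : Ω → ℝ) (hXm : Measurable X) (a b : ℝ)
    (hab : ∀ᵐ ω ∂P, X ω ∈ Set.Icc a b) :
    ∀ l : ℝ, (∫ ω, Real.exp (l * (X ω - ∫ ω₀, X ω₀ ∂P)) ∂P) ≤
      Real.exp (l ^ 2 * ((b - a) / 2) ^ 2 / 2) := by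
  intro l
  have hne : (MeasureTheory.ae P).NeBot := ae_neBot.mpr (IsProbabilityMeasure.ne_zero P)
  obtain ⟨ω₁, hω₁⟩ := hab.exists
  have hab' : a ≤ b := hω₁.1.trans hω₁.2
  have hXi : Integrable X P := by
    apply (integrable_const (max |a| |b|)).mono' hXm.aestronglyMeasurable
    filter_upwards [hab] with ω hω
    rw [Real.norm_eq_abs]
    exact abs_le_max_abs_abs hω.1 hω.2
  set m := ∫ ω, X ω ∂P with hm
  have hma : a ≤ m := by
    have := integral_mono_ae (integrable_const a) hXi (hab.mono fun ω h => h.1)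
    simpa using this
  have hmb : m ≤ b := by
    have := integral_mono_ae hXi (integrable_const b) (hab.mono fun ω h => h.2)
    simpa using this
  rcases eq_or_lt_of_le hab' with heq | hlt
  · have hX : ∀ᵐ ω ∂P, X ω = a := hab.mono fun ω h => le_antisymm (heq ▸ h.2) h.1
    have hm' : m = a := by
      rw [hm, integral_congr_ae (hX.mono fun ω h => h)]
      simp
    have hone : ∀ᵐ ω ∂P, Real.exp (l * (X ω - m)) = 1 := by
      filter_upwards [hX] with ω h
      rw [h, hm']; simp
    rw [integral_congr_ae hone]
    simp only [integral_const, measure_univ, ENNReal.toReal_one, probReal_univ, smul_eq_mul, one_mul, mul_one]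
    exact Real.one_le_exp (by positivity)
  · set a' := a - m with ha'def
    set b' := b - m with hb'def
    have ha' : a' ≤ 0 := by rw [ha'def]; linarith
    have hb' : 0 ≤ b' := by rw [hb'def]; linarith
    have hd : a' < b' := by rw [ha'def, hb'def]; linarith
    have hd' : (0:ℝ) < b' - a' := by linarith
    set c1 := Real.exp (l * a') with hc1
    set c2 := Real.exp (l * b') with hc2
    set f : Ω → ℝ := fun ω =>
      (b' * c1 - a' * c2) / (b' - a') + (X ω - m) * ((c2 - c1) / (b' - a')) with hf
    have hXmi : Integrable (fun ω => X ω - m) P := hXi.sub (integrable_const m)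
    have hfi : Integrable f P := (integrable_const _).add (hXmi.mul_const _)
    have hbound : ∀ᵐ ω ∂P, Real.exp (l * (X ω - m)) ≤ f ω := by
      filter_upwards [hab] with ω hω
      have hy1 : a' ≤ X ω - m := by rw [ha'def]; linarith [hω.1]
      have hy2 : X ω - m ≤ b' := by rw [hb'def]; linarith [hω.2]
      have := pointwise_conv (l := l) hd hy1 hy2
      refine this.trans (le_of_eq ?_)
      rw [hf, hc1, hc2]
      field_simp
      ring
    have hexpi : Integrable (fun ω => Real.exp (l * (X ω - m))) P := by
      apply (integrable_const (Real.exp (|l| * (|a'| + |b'|)))).mono'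
      · exact (Real.continuous_exp.measurable.comp
          (((hXm.sub measurable_const).const_mul l))).aestronglyMeasurable
      · filter_upwards [hab] with ω hω
        rw [Real.norm_eq_abs, abs_of_pos (Real.exp_pos _), Real.exp_le_exp]
        have h1 : |X ω - m| ≤ |a'| + |b'| := by
          rw [abs_le]
          constructor
          · have := neg_abs_le a'
            rw [ha'def] at *
            have hb'' := abs_nonneg b'
            nlinarith [hω.1]
          · have := le_abs_self b'
            rw [hb'def] at *
            have ha'' := abs_nonneg a'
            nlinarith [hω.2]
        calc l * (X ω - m) ≤ |l * (X ω - m)| := le_abs_self _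
          _ = |l| * |X ω - m| := abs_mul _ _
          _ ≤ |l| * (|a'| + |b'|) := mul_le_mul_of_nonneg_left h1 (abs_nonneg l)
    have step1 : (∫ ω, Real.exp (l * (X ω - m)) ∂P) ≤ ∫ ω, f ω ∂P :=
      integral_mono_ae hexpi hfi hbound
    have h0 : (∫ ω, (X ω - m) ∂P) = 0 := by
      rw [integral_sub hXi (integrable_const m), integral_const]
      simp [hm]
    have step2 : (∫ ω, f ω ∂P) = (b' * c1 - a' * c2) / (b' - a') := by
      rw [hf]
      rw [integral_add (integrable_const _) (hXmi.mul_const _), integral_const,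
        integral_mul_const, h0]
      simp
    have step3 := final_calc (l := l) ha' hb' hd
    rw [← hc1, ← hc2] at step3
    have hba : b' - a' = b - a := by rw [ha'def, hb'def]; ring
    calc (∫ ω, Real.exp (l * (X ω - m)) ∂P) ≤ (b' * c1 - a' * c2) / (b' - a') := by
          rw [← step2]; exact step1
      _ ≤ Real.exp ((l * (b' - a')) ^ 2 / 8) := step3
      _ = Real.exp (l ^ 2 * ((b - a) / 2) ^ 2 / 2) := by rw [hba]; congr 1; ring

end HoeffdingAux

/-- A random variable taking values in `[a,b]` a.s. is `(b−a)/2`-sub-Gaussian. -/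
theorem isSubGaussian_of_mem_Icc {Ω : Type*} [MeasurableSpace Ω] (P : Measure Ω)
    [IsProbabilityMeasure P] (X : Ω → ℝ) (hXm : Measurable X) (a b : ℝ)
    (hab : ∀ᵐ ω ∂P, X ω ∈ Set.Icc a b) :
    IsSubGaussian P X ((b - a) / 2) := by
  exact isSubGaussian_of_mem_Icc' P X hXm a b hab
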